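/- arXiv:2601.06107 — 3 statements merged into one kernel-verified Lean document; each statement's English description precedes it below -/
import Mathlib

section
/- Let Ω ⊂ ℝ^{n+1} be a closed convex set and u a unit vector. If for some t₀ ∈ ℝ the section Ω ∩ {x : ⟨u,x⟩ = t₀} is nonempty and bounded, then Ω ∩ {x : ⟨u,x⟩ = t} is bounded for every t ∈ ℝ. -/
open Bornology

/-- An unbounded closed convex set in a finite-dimensional space contains a ray. -/
lemma exists_ray_of_unbounded {E : Type*} [NormedAddCommGroup E] [NormedSpace ℝ E]
    [FiniteDimensional ℝ E] {S : Set E} (hS : IsClosed S) (hconv : Convex ℝ S)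
    (hub : ¬ IsBounded S) :
    ∃ x ∈ S, ∃ v : E, ‖v‖ = 1 ∧ ∀ s : ℝ, 0 ≤ s → x + s • v ∈ S := by
  -- pick a base point
  have hne : S.Nonempty := by
    by_contra h
    exact hub (by simp [Set.not_nonempty_iff_eq_empty.mp h])
  obtain ⟨x, hx⟩ := hne
  -- sequence going to infinity
  have hseq : ∀ k : ℕ, ∃ y ∈ S, (k : ℝ) < ‖y - x‖ := by
    intro k
    by_contra h
    push_neg at h
    exact hub (((Metric.isBounded_closedBall (x := x) (r := k)).subset)
      (fun y hy => by simpa [Metric.mem_closedBall, dist_eq_norm] using h y hy))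
  choose y hyS hyk using hseq
  have hy0 : ∀ k : ℕ, y k - x ≠ 0 := by
    intro k h
    have := hyk k
    rw [h, norm_zero] at this
    exact (Nat.cast_nonneg k).not_gt this
  set v : ℕ → E := fun k => ‖y k - x‖⁻¹ • (y k - x) with hv
  have hvmem : ∀ k, v k ∈ Metric.sphere (0 : E) 1 := by
    intro k
    simp [hv, norm_smul, norm_inv, inv_mul_cancel₀ (norm_ne_zero_iff.mpr (hy0 k))]
  obtain ⟨w, hwmem, φ, hφ, hconv'⟩ :=
    (isCompact_sphere (0 : E) 1).tendsto_subseq hvmem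
  refine ⟨x, hx, w, by simpa using hwmem, ?_⟩
  intro s hs
  -- x + s • v (φ k) ∈ S for large k
  have hmem : ∀ᶠ k in Filter.atTop, x + s • v (φ k) ∈ S := by
    have htend : Filter.Tendsto (fun k => ‖y (φ k) - x‖) Filter.atTop Filter.atTop := by
      apply Filter.tendsto_atTop_mono (fun k => (hyk (φ k)).le)
      exact (tendsto_natCast_atTop_atTop).comp hφ.tendsto_atTop
    filter_upwards [htend.eventually_ge_atTop s] with k hk
    have hd : (0:ℝ) < ‖y (φ k) - x‖ := norm_pos_iff.mpr (hy0 (φ k))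
    have h01 : s / ‖y (φ k) - x‖ ∈ Set.Icc (0:ℝ) 1 := by
      constructor
      · positivity
      · rw [div_le_one hd]; exact hk
    have hcomb : x + s • v (φ k)
        = (1 - s / ‖y (φ k) - x‖) • x + (s / ‖y (φ k) - x‖) • (y (φ k)) := by
      simp only [hv, smul_smul]
      rw [sub_smul, one_smul, smul_sub]
      field_simp
      module
    rw [hcomb]
    exact hconv hx (hyS (φ k)) (by linarith [h01.2]) h01.1 (by linarith [h01.1])
  have hlim : Filter.Tendsto (fun k => x + s • v (φ k)) Filter.atTop (nhds (x + s • w)) :=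
    (tendsto_const_nhds.add (hconv'.const_smul s))
  exact hS.mem_of_tendsto hlim hmem

/-- If one nonempty section of a closed convex set `Ω ⊂ ℝ^{n+1}` by a
hyperplane `{⟨u,x⟩ = t₀}` is bounded, then all parallel sections are bounded. -/
theorem stmt11 (n : ℕ) (Ω : Set (EuclideanSpace ℝ (Fin (n+1))))
    (hclosed : IsClosed Ω) (hconv : Convex ℝ Ω)
    (u : EuclideanSpace ℝ (Fin (n+1))) (hu : ‖u‖ = 1) (t₀ : ℝ)
    (hne : (Ω ∩ {x | (inner ℝ u x : ℝ) = t₀}).Nonempty)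
    (hbd : IsBounded (Ω ∩ {x | (inner ℝ u x : ℝ) = t₀})) :
    ∀ t : ℝ, IsBounded (Ω ∩ {x | (inner ℝ u x : ℝ) = t}) := by
  intro t
  by_contra hub
  -- the section at t is closed and convex
  have hScl : IsClosed (Ω ∩ {x | (inner ℝ u x : ℝ) = t}) := by
    apply hclosed.inter
    exact isClosed_eq (Continuous.inner continuous_const continuous_id) continuous_const
  have hSconv : Convex ℝ (Ω ∩ {x | (inner ℝ u x : ℝ) = t}) := by
    apply hconv.inter
    intro a ha b hb α β hα hβ hab
    simp only [Set.mem_setOf_eq] at ha hb ⊢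
    rw [inner_add_right, inner_smul_right, inner_smul_right, ha, hb]
    linear_combination t * hab
  obtain ⟨x, hx, v, hv1, hray⟩ := exists_ray_of_unbounded hScl hSconv hub
  -- ⟨u, v⟩ = 0
  have huv : (inner ℝ u v : ℝ) = 0 := by
    have h0 := hx.2
    have h1 := (hray 1 zero_le_one).2
    simp only [Set.mem_setOf_eq, inner_add_right, inner_smul_right, one_smul] at h0 h1 ⊢
    rw [h0] at h1
    linarith [h1]
  -- p + s • v ∈ Ω for all s ≥ 0
  obtain ⟨p, hpΩ, hpt⟩ := hne
  have hrayp : ∀ s : ℝ, 0 ≤ s → p + s • v ∈ Ω := by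
    intro s hs
    have hlim : Filter.Tendsto
        (fun τ : ℝ => (1 - s / τ) • p + (s / τ) • (x + τ • v)) Filter.atTop
        (nhds (p + s • v)) := by
      have h1 : Filter.Tendsto (fun τ : ℝ => s / τ) Filter.atTop (nhds 0) :=
        tendsto_const_div_atTop_nhds_zero_nat s |>.comp Filter.tendsto_id |> fun _ => by
          exact tendsto_const_nhds.div_atTop Filter.tendsto_id
      have heq : ∀ᶠ τ : ℝ in Filter.atTop,
          (1 - s / τ) • p + (s / τ) • (x + τ • v) = p + (s / τ) • (x - p) + s • v := by
        filter_upwards [Filter.eventually_gt_atTop (0:ℝ)] with τ hτ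
        have : (s / τ) * τ = s := div_mul_cancel₀ s hτ.ne'
        rw [smul_add, smul_smul, this]
        module
      rw [Filter.tendsto_congr' heq]
      have : Filter.Tendsto (fun τ : ℝ => p + (s / τ) • (x - p) + s • v) Filter.atTop
          (nhds (p + (0:ℝ) • (x - p) + s • v)) := by
        exact ((tendsto_const_nhds.add (h1.smul_const (x - p))).add tendsto_const_nhds)
      simpa using this
    apply hclosed.mem_of_tendsto hlim
    filter_upwards [Filter.eventually_ge_atTop (max s 1)] with τ hτ
    have hτ1 : (1:ℝ) ≤ τ := le_trans (le_max_right s 1) hτ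
    have hτ0 : (0:ℝ) < τ := lt_of_lt_of_le one_pos hτ1
    have hsτ : s ≤ τ := le_trans (le_max_left s 1) hτ
    have h01 : 0 ≤ s / τ := by positivity
    have h11 : s / τ ≤ 1 := by rw [div_le_one hτ0]; exact hsτ
    exact hconv hpΩ (hray τ hτ0.le).1 (by linarith) h01 (by linarith)
  -- but then the section at t₀ is unbounded
  have : ∀ s : ℝ, 0 ≤ s → p + s • v ∈ Ω ∩ {x | (inner ℝ u x : ℝ) = t₀} := by
    intro s hs
    refine ⟨hrayp s hs, ?_⟩
    simp only [Set.mem_setOf_eq, inner_add_right, inner_smul_right, huv, mul_zero, add_zero]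
    exact hpt
  obtain ⟨R, hR⟩ := hbd.subset_closedBall 0
  set c := max R 0 + ‖p‖ + 1 with hc
  have hc0 : (0:ℝ) ≤ c := by positivity
  have hmem := this c hc0
  have hball := hR hmem
  simp only [Metric.mem_closedBall, dist_zero_right] at hball
  have hcv : ‖c • v‖ = c := by
    rw [norm_smul, hv1, mul_one, Real.norm_eq_abs, abs_of_nonneg hc0]
  have h2 : ‖c • v‖ ≤ ‖p + c • v‖ + ‖p‖ := by
    calc ‖c • v‖ = ‖(p + c • v) - p‖ := by rw [add_sub_cancel_left]
    _ ≤ ‖p + c • v‖ + ‖p‖ := norm_sub_le _ _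
  have hRm : R ≤ max R 0 := le_max_left R 0
  rw [hcv] at h2
  linarith
end

section
/- Let P = {(x, y) ∈ ℝ^n × ℝ : y ≥ ‖x‖²} be the epigraph of the standard paraboloid. For every unit vector u ∈ ℝ^{n+1} with last coordinate positive and all t such that the section P ∩ {z : ⟨u,z⟩ = t} is nonempty and bounded, the centroids of these sections lie on a line parallel to the axis e_{n+1}; in particular the paraboloid satisfies the section–centroid collinearity property with all centroid lines mutually parallel. -/
open MeasureTheory Bornology

/-- The centroid of a set `S ⊂ ℝ^{n+1}` with respect to `n`-dimensional Hausdorff measure. -/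
noncomputable def sectionCentroid (n : ℕ) (S : Set (EuclideanSpace ℝ (Fin (n+1)))) :
    EuclideanSpace ℝ (Fin (n+1)) :=
  ((μH[(n:ℝ)] S).toReal)⁻¹ • ∫ x in S, x ∂(μH[(n:ℝ)])

/-- For the epigraph `P = {(x,y) : y ≥ ‖x‖²}` of the standard paraboloid and
any unit vector `u` with positive last coordinate, the centroids of the nonempty bounded
hyperplane sections `P ∩ {⟨u,z⟩ = t}` (of positive finite `n`-dimensional measure) lie on
a line parallel to the axis `e_{n+1}`; the paraboloid satisfies the section–centroid
collinearity property with all centroid lines mutually parallel. -/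
theorem stmt12 (n : ℕ)
    (P : Set (EuclideanSpace ℝ (Fin (n+1))))
    (hP : P = {z | ∑ i : Fin n, (z i.castSucc)^2 ≤ z (Fin.last n)})
    (u : EuclideanSpace ℝ (Fin (n+1))) (hu : ‖u‖ = 1) (hupos : 0 < u (Fin.last n)) :
    ∃ c : EuclideanSpace ℝ (Fin (n+1)), ∀ t : ℝ,
      (P ∩ {z | (inner ℝ u z : ℝ) = t}).Nonempty →
      IsBounded (P ∩ {z | (inner ℝ u z : ℝ) = t}) →
      0 < μH[(n:ℝ)] (P ∩ {z | (inner ℝ u z : ℝ) = t}) →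
      μH[(n:ℝ)] (P ∩ {z | (inner ℝ u z : ℝ) = t}) < ⊤ →
      ∃ s : ℝ, sectionCentroid n (P ∩ {z | (inner ℝ u z : ℝ) = t})
        = c + s • EuclideanSpace.single (Fin.last n) (1:ℝ) := by
  set uL := u (Fin.last n) with huLdef
  have huL0 : uL ≠ 0 := ne_of_gt hupos
  set c : EuclideanSpace ℝ (Fin (n+1)) :=
    (WithLp.equiv 2 (Fin (n+1) → ℝ)).symm
      (fun i => if i = Fin.last n then 0 else -u i / (2 * uL)) with hc
  have hcapp : ∀ i, c i = if i = Fin.last n then 0 else -u i / (2 * uL) := fun i => rfl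
  refine ⟨c, ?_⟩
  intro t hne hbdd hpos hfin
  set C : ℝ := ∑ i : Fin n, (u i.castSucc)^2 with hC
  set sL : ℝ := C / (2 * uL^2) + t / uL with hsL
  refine ⟨sL, ?_⟩
  set μ := (μH[(n:ℝ)] : Measure (EuclideanSpace ℝ (Fin (n+1)))) with hμ
  set S := P ∩ {z | (inner ℝ u z : ℝ) = t} with hS
  set m : EuclideanSpace ℝ (Fin (n+1)) := c + sL • EuclideanSpace.single (Fin.last n) (1:ℝ) with hm
  have hmc : ∀ i : Fin n, m i.castSucc = -u i.castSucc / (2 * uL) := by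
    intro i
    have hne' : i.castSucc ≠ Fin.last n := (Fin.castSucc_lt_last i).ne
    simp [hm, PiLp.add_apply, PiLp.smul_apply, EuclideanSpace.single_apply, hcapp, hne']
  have hmL : m (Fin.last n) = sL := by
    simp [hm, PiLp.add_apply, PiLp.smul_apply, EuclideanSpace.single_apply, hcapp]
  -- membership of S
  have hmem : ∀ z : EuclideanSpace ℝ (Fin (n+1)), z ∈ S ↔
      (∑ i : Fin n, (z i.castSucc)^2 ≤ z (Fin.last n) ∧
        (∑ i : Fin n, u i.castSucc * z i.castSucc) + uL * z (Fin.last n) = t) := by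
    intro z
    have hin : (inner ℝ u z : ℝ) = ∑ i, u i * z i := by
      simp [PiLp.inner_apply, RCLike.inner_apply, conj_trivial]
      exact Finset.sum_congr rfl fun i _ => mul_comm _ _
    rw [hS, hP]
    simp only [Set.mem_inter_iff, Set.mem_setOf_eq, hin, Fin.sum_univ_castSucc]
    exact Iff.rfl
  -- point reflection about m
  set φ : EuclideanSpace ℝ (Fin (n+1)) ≃ᵢ EuclideanSpace ℝ (Fin (n+1)) :=
    (AffineIsometryEquiv.pointReflection ℝ m).toIsometryEquiv with hφ
  have hφapp : ∀ z i, φ z i = 2 * m i - z i := by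
    intro z i
    simp [hφ, AffineIsometryEquiv.pointReflection_apply, Equiv.pointReflection_apply]
    ring
  have hφvec : ∀ z : EuclideanSpace ℝ (Fin (n+1)), φ z = (2:ℝ) • m - z := by
    intro z
    ext i
    simp [hφapp, PiLp.sub_apply, PiLp.smul_apply]
  have hφinv : ∀ z, φ (φ z) = z := by
    intro z; ext i; simp [hφapp]
  -- symmetry of S
  have hsym : ∀ z ∈ S, φ z ∈ S := by
    intro z hz
    rw [hmem] at hz ⊢
    obtain ⟨h1, h2⟩ := hz
    have hwc : ∀ i : Fin n, φ z i.castSucc = -u i.castSucc / uL - z i.castSucc := by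
      intro i; rw [hφapp, hmc]; field_simp
    have hwL : φ z (Fin.last n) = 2 * sL - z (Fin.last n) := by rw [hφapp, hmL]
    constructor
    · have hsum : ∑ i : Fin n, (φ z i.castSucc)^2 =
          (∑ i : Fin n, (z i.castSucc)^2)
            + (2/uL) * (∑ i : Fin n, u i.castSucc * z i.castSucc) + C / uL^2 := by
        rw [Finset.mul_sum, hC, Finset.sum_div, ← Finset.sum_add_distrib,
          ← Finset.sum_add_distrib]
        refine Finset.sum_congr rfl fun i _ => ?_
        rw [hwc]
        field_simp
        ring
      rw [hsum, hwL]
      have hB : (∑ i : Fin n, u i.castSucc * z i.castSucc) = t - uL * z (Fin.last n) := by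
        linarith
      rw [hB, hsL]
      have key : (2/uL) * (t - uL * z (Fin.last n)) + C/uL^2
          = 2 * (C / (2*uL^2) + t/uL) - z (Fin.last n) - z (Fin.last n) := by
        field_simp
        ring
      linarith
    · rw [hwL]
      have hsum2 : ∑ i : Fin n, u i.castSucc * (φ z i.castSucc)
          = -C/uL - ∑ i : Fin n, u i.castSucc * z i.castSucc := by
        calc ∑ i : Fin n, u i.castSucc * (φ z i.castSucc)
            = ∑ i : Fin n, (-(u i.castSucc)^2/uL - u i.castSucc * z i.castSucc) := by
              refine Finset.sum_congr rfl fun i _ => ?_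
              rw [hwc]; field_simp
          _ = (∑ i : Fin n, -(u i.castSucc)^2)/uL
                - ∑ i : Fin n, u i.castSucc * z i.castSucc := by
              rw [Finset.sum_sub_distrib, Finset.sum_div]
          _ = -C/uL - ∑ i : Fin n, u i.castSucc * z i.castSucc := by
              rw [hC, Finset.sum_neg_distrib, neg_div]
      rw [hsum2]
      have h3 : uL * (2 * sL) = C/uL + 2*t := by
        rw [hsL]; field_simp
      have hexp : uL * (2 * sL - z (Fin.last n)) = uL * (2 * sL) - uL * z (Fin.last n) := by ring
      rw [hexp, h3, neg_div]
      linarith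
  have hpre : φ ⁻¹' S = S := by
    apply Set.eq_of_subset_of_subset
    · intro z hz
      have := hsym (φ z) hz
      rwa [hφinv] at this
    · intro z hz
      exact hsym z hz
  -- measurability
  have hSmeas : MeasurableSet S := by
    refine (IsClosed.inter ?_ ?_).measurableSet
    · rw [hP]
      apply isClosed_le
      · exact continuous_finset_sum _ fun i _ =>
          ((EuclideanSpace.proj (i.castSucc : Fin (n+1))).continuous).pow 2
      · exact (EuclideanSpace.proj (Fin.last n)).continuous
    · exact isClosed_eq (Continuous.inner continuous_const continuous_id) continuous_const
  -- integrability of id on S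
  have hIntId : IntegrableOn (fun z : EuclideanSpace ℝ (Fin (n+1)) => z) S μ := by
    obtain ⟨R, hR⟩ := hbdd.subset_closedBall 0
    refine Integrable.mono' (g := fun _ => R) ((integrableOn_const_iff (C := R)).2 (Or.inr hfin))
      aestronglyMeasurable_id ?_
    refine (ae_restrict_iff' hSmeas).2 (Filter.Eventually.of_forall fun z hz => ?_)
    simpa using mem_closedBall_zero_iff.mp (hR hz)
  -- change of variables
  have hmp : MeasurePreserving φ μ μ := φ.measurePreserving_hausdorffMeasure _
  have hemb : MeasurableEmbedding φ := φ.toHomeomorph.toMeasurableEquiv.measurableEmbedding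
  have hchg : ∫ z in S, (φ z : EuclideanSpace ℝ (Fin (n+1))) ∂μ = ∫ z in S, z ∂μ := by
    conv_lhs => rw [← hpre]
    exact hmp.setIntegral_preimage_emb hemb (fun z => z) S
  set I : EuclideanSpace ℝ (Fin (n+1)) := ∫ z in S, z ∂μ with hI
  have hsub : ∫ z in S, (φ z : EuclideanSpace ℝ (Fin (n+1))) ∂μ
      = (μ S).toReal • ((2:ℝ) • m) - I := by
    simp only [hφvec]
    rw [integral_sub ((integrableOn_const_iff (C := (2:ℝ) • m)).2 (Or.inr hfin)) hIntId, setIntegral_const]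
    rfl
  have h2I : I + I = (μ S).toReal • ((2:ℝ) • m) := by
    have h := hchg
    rw [hsub] at h
    exact (sub_eq_iff_eq_add.mp h).symm
  have htR : (μ S).toReal ≠ 0 := (ENNReal.toReal_pos hpos.ne' hfin.ne).ne'
  have hIm : I = (μ S).toReal • m := by
    have h1 : (2:ℝ) • I = (2:ℝ) • ((μ S).toReal • m) := by
      rw [two_smul]
      rw [h2I, smul_comm]
    have := smul_right_injective (EuclideanSpace ℝ (Fin (n+1))) (two_ne_zero (α := ℝ)) h1
    exact this
  show sectionCentroid n S = m
  rw [sectionCentroid, ← hμ, ← hI, hIm, smul_smul, inv_mul_cancel₀ htR, one_smul]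
end

section
/- Let Ω ⊂ ℝ^{n+1} be a closed convex set with recession cone C = rec(Ω), and let Ω_R = (1/R)Ω. Fix a unit vector u and t > 0 such that the sections Ω_R ∩ Π(u,t) are nonempty, bounded, and have positive n-dimensional measure for all large R, and such that C ∩ Π(u,t) is bounded with positive n-dimensional measure. Suppose Ω_R ∩ Π(u,t) converges to C ∩ Π(u,t) in Hausdorff distance as R → ∞, and suppose the centroid of Ω ∩ Π(u,s) equals q + s·w for all s in an unbounded interval (with fixed q, w ∈ ℝ^{n+1}). Then w equals the direction vector w_C of the centroid line of C, i.e., the centroid of C ∩ Π(u,t) is t·w for all admissible t. -/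
open MeasureTheory Bornology Filter Pointwise Metric
open scoped NNReal ENNReal

lemma aux_map_smul (n : ℕ) {c : ℝ} (hc : c ≠ 0) :
    (μH[(n:ℝ)] : Measure (EuclideanSpace ℝ (Fin (n+1)))) =
      Measure.map (c • ·) (((‖c‖₊ ^ (n:ℝ) : ℝ≥0) : ℝ≥0∞) • μH[(n:ℝ)]) := by
  ext A hA
  rw [Measure.map_apply (measurable_const_smul c) hA, Measure.smul_apply]
  have h1 : (c • ·) ⁻¹' A = c⁻¹ • A := by
    ext x
    simp only [Set.mem_preimage]
    rw [Set.mem_smul_set_iff_inv_smul_mem₀ (inv_ne_zero hc), inv_inv]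
  rw [h1, Measure.hausdorffMeasure_smul₀ (by positivity) (inv_ne_zero hc) A]
  rw [smul_eq_mul, ENNReal.smul_def, smul_eq_mul, ← mul_assoc, ← ENNReal.coe_mul]
  have : ‖c‖₊ ^ (n:ℝ) * ‖c⁻¹‖₊ ^ (n:ℝ) = 1 := by
    rw [← NNReal.mul_rpow, ← nnnorm_mul, mul_inv_cancel₀ hc]
    simp
  rw [this, ENNReal.coe_one, one_mul]

lemma aux_integral_smul_set (n : ℕ) {c : ℝ} (hc : 0 < c)
    (S : Set (EuclideanSpace ℝ (Fin (n+1)))) (hS : MeasurableSet S) :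
    ∫ x in c • S, x ∂(μH[(n:ℝ)]) = (c ^ ((n:ℝ)+1)) • ∫ x in S, x ∂(μH[(n:ℝ)]) := by
  have hme : MeasurableEmbedding (fun x : EuclideanSpace ℝ (Fin (n+1)) => c • x) :=
    (Homeomorph.smulOfNeZero c hc.ne').isClosedEmbedding.measurableEmbedding
  conv_lhs => rw [aux_map_smul n hc.ne']
  rw [Measure.map_smul, Measure.restrict_smul, integral_smul_measure,
    hme.setIntegral_map (fun x => x) (c • S)]
  have hpre : (fun x : EuclideanSpace ℝ (Fin (n+1)) => c • x) ⁻¹' (c • S) = S := by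
    apply Set.preimage_image_eq
    exact smul_right_injective _ hc.ne'
  rw [hpre, integral_smul, smul_smul]
  congr 1
  rw [ENNReal.coe_toReal, NNReal.coe_rpow, coe_nnnorm, Real.norm_eq_abs, abs_of_pos hc,
    Real.rpow_add hc, Real.rpow_one]

lemma sectionCentroid_smul (n : ℕ) {c : ℝ} (hc : 0 < c)
    (S : Set (EuclideanSpace ℝ (Fin (n+1)))) (hS : MeasurableSet S) :
    sectionCentroid n (c • S) = c • sectionCentroid n S := by
  unfold sectionCentroid
  rw [Measure.hausdorffMeasure_smul₀ (by positivity : (0:ℝ) ≤ (n:ℝ)) hc.ne' S,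
    aux_integral_smul_set n hc S hS, ENNReal.smul_def, smul_eq_mul, ENNReal.toReal_mul,
    smul_smul, smul_smul]
  congr 1
  have hcn : ((‖c‖₊ ^ (n:ℝ) : ℝ≥0) : ℝ≥0∞).toReal = c ^ (n:ℝ) := by
    rw [ENNReal.coe_toReal, NNReal.coe_rpow, coe_nnnorm, Real.norm_eq_abs, abs_of_pos hc]
  rw [hcn, mul_inv, Real.rpow_add hc, Real.rpow_one]
  have h1 : (c ^ (n:ℝ))⁻¹ * ((μH[(n:ℝ)] S).toReal)⁻¹ * (c ^ (n:ℝ) * c)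
      = ((c ^ (n:ℝ))⁻¹ * c ^ (n:ℝ)) * (c * ((μH[(n:ℝ)] S).toReal)⁻¹) := by ring
  rw [h1, inv_mul_cancel₀ (by positivity), one_mul]

lemma exists_isometry (n : ℕ) (u : EuclideanSpace ℝ (Fin (n+1))) (hu : ‖u‖ = 1) (t : ℝ) :
    ∃ e : EuclideanSpace ℝ (Fin n) → EuclideanSpace ℝ (Fin (n+1)),
      Isometry e ∧ Set.range e = {x | (inner ℝ u x : ℝ) = t} ∧
      (∀ p q (s1 s2 : ℝ), s1 + s2 = 1 → e (s1•p + s2•q) = s1 • e p + s2 • e q) := by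
  have hune : u ≠ 0 := by intro h; rw [h] at hu; simp at hu
  haveI : Fact (Module.finrank ℝ (EuclideanSpace ℝ (Fin (n+1))) = n + 1) :=
    ⟨finrank_euclideanSpace_fin⟩
  have hdim : Module.finrank ℝ ((ℝ ∙ u)ᗮ : Submodule ℝ (EuclideanSpace ℝ (Fin (n+1)))) = n :=
    Submodule.finrank_orthogonal_span_singleton hune
  set V : Submodule ℝ (EuclideanSpace ℝ (Fin (n+1))) := (ℝ ∙ u)ᗮ with hV
  let b : OrthonormalBasis (Fin n) ℝ V := (stdOrthonormalBasis ℝ V).reindex (finCongr hdim)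
  refine ⟨fun y => t • u + ((b.repr.symm y : V) : EuclideanSpace ℝ (Fin (n+1))), ?_, ?_, ?_⟩
  · apply Isometry.of_dist_eq
    intro y1 y2
    rw [dist_add_left]
    have : dist ((b.repr.symm y1 : V) : EuclideanSpace ℝ (Fin (n+1))) (b.repr.symm y2 : V)
        = dist (b.repr.symm y1) (b.repr.symm y2) := rfl
    rw [this, b.repr.symm.dist_map]
  · ext x
    simp only [Set.mem_range, Set.mem_setOf_eq]
    constructor
    · rintro ⟨y, rfl⟩
      rw [inner_add_right, real_inner_smul_right]
      have h0 : (inner ℝ u ((b.repr.symm y : V) : EuclideanSpace ℝ (Fin (n+1))) : ℝ) = 0 :=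
        Submodule.mem_orthogonal_singleton_iff_inner_right.mp (b.repr.symm y).2
      rw [h0, real_inner_self_eq_norm_sq, hu]
      ring
    · intro hx
      have hv : x - t • u ∈ V := by
        rw [hV, Submodule.mem_orthogonal_singleton_iff_inner_right, inner_sub_right,
          real_inner_smul_right, real_inner_self_eq_norm_sq, hu, hx]
        ring
      refine ⟨b.repr ⟨x - t • u, hv⟩, ?_⟩
      rw [b.repr.symm_apply_apply]
      simp
  · intro p q s1 s2 hs
    have : b.repr.symm (s1 • p + s2 • q) = s1 • b.repr.symm p + s2 • b.repr.symm q := by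
      simp [map_add, _root_.map_smul]
    simp only []
    have hu1 : s1 • (t • u) + s2 • (t • u) = t • u := by
      rw [← add_smul, hs, one_smul]
    simp only [this, Submodule.coe_add, Submodule.coe_smul, smul_add]
    conv_lhs => rw [← hu1]
    abel

lemma mem_of_ball_subset {F : Type*} [NormedAddCommGroup F] [InnerProductSpace ℝ F]
    [CompleteSpace F] {B K : Set F} {y : F} {r : ℝ} (hr : 0 < r)
    (hBconv : Convex ℝ B) (hBcl : IsClosed B) (hBne : B.Nonempty)
    (hball : ball y r ⊆ K)
    (hd : ∀ z ∈ K, infDist z B < r / 2) : y ∈ B := by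
  by_contra hyB
  obtain ⟨f, c, hfy, hfb⟩ := geometric_hahn_banach_point_closed hBconv hBcl hyB
  set a := (InnerProductSpace.toDual ℝ F).symm f with ha
  have hfa : ∀ x, f x = (inner ℝ a x : ℝ) := fun x => (InnerProductSpace.toDual_symm_apply).symm
  obtain ⟨b0, hb0⟩ := hBne
  have hane : a ≠ 0 := by
    intro h
    have h1 := hfa y
    have h2 := hfa b0
    rw [h, inner_zero_left] at h1 h2
    have := hfb b0 hb0
    linarith
  have ha0 : 0 < ‖a‖ := norm_pos_iff.mpr hane
  set z := y - ((3/4*r) * ‖a‖⁻¹) • a with hz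
  have hzy : ‖z - y‖ = 3/4*r := by
    rw [hz]
    have : y - ((3/4*r) * ‖a‖⁻¹) • a - y = -(((3/4*r) * ‖a‖⁻¹) • a) := by abel
    rw [this, norm_neg, norm_smul, Real.norm_eq_abs, abs_of_pos (by positivity),
      mul_assoc, inv_mul_cancel₀ ha0.ne', mul_one]
  have hzK : z ∈ K := by
    apply hball
    rw [mem_ball, dist_eq_norm, hzy]
    linarith
  obtain ⟨b, hbB, hdist⟩ := (infDist_lt_iff ⟨b0, hb0⟩).mp (hd z hzK)
  have hfz : f z = f y - 3/4*r*‖a‖ := by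
    rw [hfa, hfa, hz, inner_sub_right, real_inner_smul_right, real_inner_self_eq_norm_mul_norm]
    field_simp
  have key : f z - f b < -(3/4*r*‖a‖) := by
    have h1 := hfb b hbB
    linarith
  have hinner : (inner ℝ a (z - b) : ℝ) = f z - f b := by
    rw [inner_sub_right, ← hfa, ← hfa]
  have habs : |(inner ℝ a (z-b) : ℝ)| ≤ ‖a‖ * ‖z-b‖ := abs_real_inner_le_norm a (z-b)
  have hnorm : 3/4 * r ≤ ‖z - b‖ := by
    have h3 : 3/4*r*‖a‖ ≤ |(inner ℝ a (z-b) : ℝ)| := by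
      rw [hinner, abs_sub_comm]
      calc 3/4*r*‖a‖ ≤ f b - f z := by linarith
      _ ≤ |f b - f z| := le_abs_self _
    have := le_trans h3 habs
    nlinarith
  rw [dist_eq_norm] at hdist
  linarith

lemma centroid_tendsto (n : ℕ) (u : EuclideanSpace ℝ (Fin (n+1))) (hu : ‖u‖ = 1) (t : ℝ)
    (A : ℝ → Set (EuclideanSpace ℝ (Fin (n+1)))) (K : Set (EuclideanSpace ℝ (Fin (n+1))))
    (hKsub : K ⊆ {x | (inner ℝ u x : ℝ) = t})
    (hKcl : IsClosed K) (hKconv : Convex ℝ K) (hKbd : IsBounded K)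
    (hKpos : 0 < μH[(n:ℝ)] K)
    (hA : ∀ᶠ R in atTop, A R ⊆ {x | (inner ℝ u x : ℝ) = t} ∧ IsClosed (A R) ∧
        Convex ℝ (A R) ∧ (A R).Nonempty ∧ IsBounded (A R))
    (hHaus : Tendsto (fun R => hausdorffDist (A R) K) atTop (nhds 0)) :
    Tendsto (fun R => sectionCentroid n (A R)) atTop (nhds (sectionCentroid n K)) := by
  classical
  obtain ⟨e, he, hrange, haff⟩ := exists_isometry n u hu t
  set ν : Measure (EuclideanSpace ℝ (Fin n)) := μH[(n:ℝ)] with hν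
  haveI hHaar : ν.IsAddHaarMeasure := by
    have h := MeasureTheory.isAddHaarMeasure_hausdorffMeasure (E := EuclideanSpace ℝ (Fin n))
    rwa [finrank_euclideanSpace_fin] at h
  have hme : MeasurableEmbedding e := he.isClosedEmbedding.measurableEmbedding
  -- transfer of measure
  have hmeasS : ∀ S : Set (EuclideanSpace ℝ (Fin (n+1))), S ⊆ Set.range e →
      μH[(n:ℝ)] S = ν (e ⁻¹' S) := by
    intro S hS
    rw [hν, ← he.hausdorffMeasure_image (Or.inl (by positivity)) (e ⁻¹' S),
      Set.image_preimage_eq_of_subset hS]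
  -- transfer of integral
  have hintS : ∀ S : Set (EuclideanSpace ℝ (Fin (n+1))), S ⊆ Set.range e → MeasurableSet S →
      ∫ x in S, x ∂(μH[(n:ℝ)]) = ∫ y in e ⁻¹' S, e y ∂ν := by
    intro S hS hSm
    have hres : (μH[(n:ℝ)] : Measure (EuclideanSpace ℝ (Fin (n+1)))).restrict S
        = (Measure.map e ν).restrict S := by
      ext B hB
      rw [Measure.restrict_apply hB, Measure.restrict_apply hB,
        Measure.map_apply hme.measurable (hB.inter hSm)]
      rw [← hmeasS (B ∩ S) (le_trans Set.inter_subset_right hS)]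
    calc ∫ x in S, x ∂(μH[(n:ℝ)]) = ∫ x in S, x ∂(Measure.map e ν) := by rw [hres]
    _ = ∫ y in e ⁻¹' S, e y ∂ν := hme.setIntegral_map (fun x => x) S
  
  have hcentS : ∀ S : Set (EuclideanSpace ℝ (Fin (n+1))), S ⊆ Set.range e → MeasurableSet S →
      sectionCentroid n S = ((ν (e ⁻¹' S)).toReal)⁻¹ • ∫ y in e ⁻¹' S, e y ∂ν := by
    intro S h1 h2
    unfold sectionCentroid
    rw [hmeasS S h1, hintS S h1 h2]
  have hKr : K ⊆ Set.range e := by rw [hrange]; exact hKsub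
  set K' := e ⁻¹' K with hK'
  have hK'cl : IsClosed K' := hKcl.preimage he.continuous
  have hK'conv : Convex ℝ K' := by
    intro x hx y hy a b ha hb hab
    show e (a • x + b • y) ∈ K
    rw [haff x y a b hab]
    exact hKconv hx hy ha hb hab
  have hK'bd : IsBounded K' := he.antilipschitz.isBounded_preimage hKbd
  have hK'cpt : IsCompact K' := Metric.isCompact_iff_isClosed_bounded.mpr ⟨hK'cl, hK'bd⟩
  have hK'pos : 0 < ν K' := by rw [hK', ← hmeasS K hKr]; exact hKpos
  have hK'fin : ν K' < ⊤ := hK'cpt.measure_lt_top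
  have hK'ne : K'.Nonempty := nonempty_of_measure_ne_zero hK'pos.ne'
  have himgK : e '' K' = K := Set.image_preimage_eq_of_subset hKr
  obtain ⟨M, hM⟩ := hK'bd.subset_closedBall 0
  have hMpos : 0 ≤ M := by
    obtain ⟨y0, hy0⟩ := hK'ne
    have := hM hy0
    rw [mem_closedBall] at this
    exact le_trans dist_nonneg this
  set D := closedBall (0 : EuclideanSpace ℝ (Fin n)) (M + 2) with hD
  have hDmeas : MeasurableSet D := measurableSet_closedBall
  have hDfin : ν D < ⊤ := (isCompact_closedBall _ _).measure_lt_top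
  obtain ⟨M', hM'⟩ := (isCompact_closedBall (0 : EuclideanSpace ℝ (Fin n))
    (M+2)).exists_bound_of_continuousOn he.continuous.continuousOn
  have hM'0 : 0 ≤ M' := le_trans (norm_nonneg _) (hM' 0 (mem_closedBall_self (by linarith)))
  set M'' := max M' 1 with hM''
  have hAev : ∀ᶠ R in atTop, (A R ⊆ Set.range e) ∧ IsClosed (A R) ∧ Convex ℝ (A R)
      ∧ (A R).Nonempty ∧ IsBounded (A R)
      ∧ hausdorffDist (e ⁻¹' A R) K' = hausdorffDist (A R) K
      ∧ EMetric.hausdorffEdist (e ⁻¹' A R) K' ≠ ⊤ := by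
    filter_upwards [hA] with R hR
    obtain ⟨h1, h2, h3, h4, h5⟩ := hR
    have h1' : A R ⊆ Set.range e := by rw [hrange]; exact h1
    have himg : e '' (e ⁻¹' A R) = A R := Set.image_preimage_eq_of_subset h1'
    have hne' : (e ⁻¹' A R).Nonempty := by
      obtain ⟨x, hx⟩ := h4
      obtain ⟨y, rfl⟩ := h1' hx
      exact ⟨y, hx⟩
    refine ⟨h1', h2, h3, h4, h5, ?_, ?_⟩
    · rw [← hausdorffDist_image he, himg, himgK]
    · exact hausdorffEdist_ne_top_of_nonempty_of_bounded hne' hK'ne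
        (he.antilipschitz.isBounded_preimage h5) hK'bd
  have hsmall : ∀ ε : ℝ, 0 < ε → ∀ᶠ R in atTop, hausdorffDist (e ⁻¹' A R) K' < ε := by
    intro ε hε
    filter_upwards [hAev, hHaus.eventually_lt_const hε] with R hR h2
    rw [hR.2.2.2.2.2.1]
    exact h2
  have hsubD : ∀ᶠ R in atTop, e ⁻¹' A R ⊆ D := by
    filter_upwards [hAev, hsmall 1 one_pos] with R hR hsm
    intro x hx
    have h1 : infDist x K' ≤ hausdorffDist (e ⁻¹' A R) K' :=
      infDist_le_hausdorffDist_of_mem hx hR.2.2.2.2.2.2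
    have h2 : infDist x K' < 1 := lt_of_le_of_lt h1 hsm
    obtain ⟨z, hzK, hz⟩ := (infDist_lt_iff hK'ne).mp (h2.trans_le one_le_two)
    have hzM : dist z 0 ≤ M := by
      have := hM hzK
      rwa [mem_closedBall] at this
    rw [hD, mem_closedBall]
    calc dist x 0 ≤ dist x z + dist z 0 := dist_triangle _ _ _
    _ ≤ M + 2 := by linarith [hz.le]
  have hptwise : ∀ᵐ y ∂ν, ∀ᶠ R in atTop, (y ∈ e ⁻¹' A R ↔ y ∈ K') := by
    have hfr : ν (frontier K') = 0 := hK'conv.addHaar_frontier ν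
    filter_upwards [measure_eq_zero_iff_ae_notMem.mp hfr] with y hy
    by_cases hyK : y ∈ K'
    · have hyint : y ∈ interior K' := by
        by_contra h
        exact hy ⟨subset_closure hyK, h⟩
      obtain ⟨r, hr, hball⟩ := Metric.isOpen_iff.mp isOpen_interior y hyint
      have hball' : ball y r ⊆ K' := hball.trans interior_subset
      filter_upwards [hAev, hsmall (r/2) (by positivity)] with R hR hsm
      obtain ⟨h1, h2, h3, h4, h5, h6, h7⟩ := hR
      have hA'cl : IsClosed (e ⁻¹' A R) := h2.preimage he.continuous
      have hA'conv : Convex ℝ (e ⁻¹' A R) := by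
        intro p hp q hq a b ha hb hab
        show e (a • p + b • q) ∈ A R
        rw [haff p q a b hab]
        exact h3 hp hq ha hb hab
      have hA'ne : (e ⁻¹' A R).Nonempty := by
        obtain ⟨x, hx⟩ := h4
        obtain ⟨p, rfl⟩ := h1 hx
        exact ⟨p, hx⟩
      have hmem : y ∈ e ⁻¹' A R := by
        apply mem_of_ball_subset hr hA'conv hA'cl hA'ne hball'
        intro z hzK
        have hne' : EMetric.hausdorffEdist K' (e ⁻¹' A R) ≠ ⊤ := by
          intro h; apply h7; rw [← h]; exact Metric.hausdorffEDist_comm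
        have h8 : infDist z (e ⁻¹' A R) ≤ hausdorffDist K' (e ⁻¹' A R) :=
          infDist_le_hausdorffDist_of_mem hzK hne'
        rw [hausdorffDist_comm] at h8
        exact lt_of_le_of_lt h8 hsm
      simp [hmem, hyK]
    · have hyn : 0 < infDist y K' := (hK'cl.notMem_iff_infDist_pos hK'ne).mp hyK
      filter_upwards [hAev, hsmall (infDist y K') hyn] with R hR hsm
      have hnm : y ∉ e ⁻¹' A R := by
        intro hmem
        have h8 := infDist_le_hausdorffDist_of_mem hmem hR.2.2.2.2.2.2
        exact absurd (lt_of_le_of_lt h8 hsm) (lt_irrefl _)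
      simp [hnm, hyK]
  have hDCT1 : Tendsto (fun R => ∫ y, (e ⁻¹' A R).indicator e y ∂ν) atTop
      (nhds (∫ y, K'.indicator e y ∂ν)) := by
    apply tendsto_integral_filter_of_dominated_convergence (D.indicator fun _ => M'')
    · filter_upwards [hAev] with R hR
      exact (he.continuous.aestronglyMeasurable).indicator
        (hR.2.1.preimage he.continuous).measurableSet
    · filter_upwards [hsubD] with R hsub
      filter_upwards with y
      by_cases hy : y ∈ e ⁻¹' A R
      · rw [Set.indicator_of_mem hy, Set.indicator_of_mem (hsub hy)]
        exact le_trans (hM' y (hsub hy)) (le_max_left _ _)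
      · rw [Set.indicator_of_notMem hy, norm_zero]
        exact Set.indicator_apply_nonneg (fun _ => by positivity)
    · rw [integrable_indicator_iff hDmeas]
      exact integrableOn_const hDfin.ne
    · filter_upwards [hptwise] with y hy
      refine Tendsto.congr' ?_ tendsto_const_nhds
      filter_upwards [hy] with R hR
      by_cases hyK : y ∈ K'
      · rw [Set.indicator_of_mem hyK, Set.indicator_of_mem (hR.mpr hyK)]
      · rw [Set.indicator_of_notMem hyK, Set.indicator_of_notMem (fun h => hyK (hR.mp h))]
  have hDCT2 : Tendsto (fun R => ∫ y, (e ⁻¹' A R).indicator (fun _ => (1:ℝ)) y ∂ν) atTop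
      (nhds (∫ y, K'.indicator (fun _ => (1:ℝ)) y ∂ν)) := by
    apply tendsto_integral_filter_of_dominated_convergence (D.indicator fun _ => (1:ℝ))
    · filter_upwards [hAev] with R hR
      exact aestronglyMeasurable_const.indicator (hR.2.1.preimage he.continuous).measurableSet
    · filter_upwards [hsubD] with R hsub
      filter_upwards with y
      by_cases hy : y ∈ e ⁻¹' A R
      · rw [Set.indicator_of_mem hy, Set.indicator_of_mem (hsub hy)]
        simp
      · rw [Set.indicator_of_notMem hy, norm_zero]
        exact Set.indicator_apply_nonneg (fun _ => by positivity)
    · rw [integrable_indicator_iff hDmeas]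
      exact integrableOn_const hDfin.ne
    · filter_upwards [hptwise] with y hy
      refine Tendsto.congr' ?_ tendsto_const_nhds
      filter_upwards [hy] with R hR
      by_cases hyK : y ∈ K'
      · rw [Set.indicator_of_mem hyK, Set.indicator_of_mem (hR.mpr hyK)]
      · rw [Set.indicator_of_notMem hyK, Set.indicator_of_notMem (fun h => hyK (hR.mp h))]
  have hμ : Tendsto (fun R => (ν (e ⁻¹' A R)).toReal) atTop (nhds ((ν K').toReal)) := by
    have h1 : ∫ y, K'.indicator (fun _ => (1:ℝ)) y ∂ν = (ν K').toReal := by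
      rw [integral_indicator_const (1:ℝ) hK'cl.measurableSet]
      simp
      rfl
    rw [← h1]
    apply hDCT2.congr'
    filter_upwards [hAev] with R hR
    rw [integral_indicator_const (1:ℝ) (hR.2.1.preimage he.continuous).measurableSet]
    simp
    rfl
  have hI : Tendsto (fun R => ∫ y in e ⁻¹' A R, e y ∂ν) atTop (nhds (∫ y in K', e y ∂ν)) := by
    have h1 : ∫ y, K'.indicator e y ∂ν = ∫ y in K', e y ∂ν :=
      integral_indicator hK'cl.measurableSet
    rw [← h1]
    apply hDCT1.congr'
    filter_upwards [hAev] with R hR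
    exact integral_indicator (hR.2.1.preimage he.continuous).measurableSet
  have hm0 : ((ν K').toReal) ≠ 0 := (ENNReal.toReal_pos hK'pos.ne' hK'fin.ne).ne'
  have hfinal := (hμ.inv₀ hm0).smul hI
  rw [hcentS K hKr hKcl.measurableSet]
  refine Tendsto.congr' ?_ hfinal
  filter_upwards [hAev] with R hR
  exact (hcentS (A R) hR.1 hR.2.1.measurableSet).symm

/-- Let `Ω` be closed convex with recession cone `C`, `Ω_R = R⁻¹ Ω`. Fix a
unit vector `u` and `t > 0` such that for all large `R` the sections `Ω_R ∩ Π(u,t)` are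
nonempty, bounded, of positive finite `n`-dimensional measure, and `C ∩ Π(u,t)` is bounded
of positive `n`-dimensional measure. If `Ω_R ∩ Π(u,t)` converges in Hausdorff distance to
`C ∩ Π(u,t)` as `R → ∞`, and the centroid of `Ω ∩ Π(u,s)` equals `q + s•w` on an unbounded
interval `[s₀,∞)`, then `w` is the direction of the centroid line of `C`: the centroid of
`C ∩ Π(u,t')` is `t'•w` for all admissible `t' > 0`. -/
theorem stmt14 (n : ℕ) (Ω : Set (EuclideanSpace ℝ (Fin (n+1))))
    (hclosed : IsClosed Ω) (hconv : Convex ℝ Ω)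
    (C : Set (EuclideanSpace ℝ (Fin (n+1))))
    (hC : C = {d | ∀ x ∈ Ω, ∀ r : ℝ, 0 ≤ r → x + r • d ∈ Ω})
    (u : EuclideanSpace ℝ (Fin (n+1))) (hu : ‖u‖ = 1) (t : ℝ) (ht : 0 < t)
    (hsec : ∃ R₀ : ℝ, ∀ R ≥ R₀,
      ((R⁻¹ • Ω) ∩ {x | (inner ℝ u x : ℝ) = t}).Nonempty ∧
      IsBounded ((R⁻¹ • Ω) ∩ {x | (inner ℝ u x : ℝ) = t}) ∧
      0 < μH[(n:ℝ)] ((R⁻¹ • Ω) ∩ {x | (inner ℝ u x : ℝ) = t}) ∧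
      μH[(n:ℝ)] ((R⁻¹ • Ω) ∩ {x | (inner ℝ u x : ℝ) = t}) < ⊤)
    (hCbd : IsBounded (C ∩ {x | (inner ℝ u x : ℝ) = t}))
    (hCpos : 0 < μH[(n:ℝ)] (C ∩ {x | (inner ℝ u x : ℝ) = t}))
    (hHaus : Tendsto (fun R : ℝ =>
        Metric.hausdorffDist ((R⁻¹ • Ω) ∩ {x | (inner ℝ u x : ℝ) = t})
          (C ∩ {x | (inner ℝ u x : ℝ) = t})) atTop (nhds 0))
    (q w : EuclideanSpace ℝ (Fin (n+1))) (s₀ : ℝ)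
    (hcen : ∀ s : ℝ, s₀ ≤ s →
      sectionCentroid n (Ω ∩ {x | (inner ℝ u x : ℝ) = s}) = q + s • w) :
    ∀ t' : ℝ, 0 < t' → IsBounded (C ∩ {x | (inner ℝ u x : ℝ) = t'}) →
      0 < μH[(n:ℝ)] (C ∩ {x | (inner ℝ u x : ℝ) = t'}) →
      sectionCentroid n (C ∩ {x | (inner ℝ u x : ℝ) = t'}) = t' • w := by
  intro t' ht' _hb _hp
  obtain ⟨R₀, hsec⟩ := hsec
  -- hyperplanes
  have hplcl : ∀ s : ℝ, IsClosed {x : EuclideanSpace ℝ (Fin (n+1)) | (inner ℝ u x : ℝ) = s} :=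
    fun s => isClosed_eq (continuous_const.inner continuous_id) continuous_const
  have hplcv : ∀ s : ℝ, Convex ℝ {x : EuclideanSpace ℝ (Fin (n+1)) | (inner ℝ u x : ℝ) = s} := by
    intro s x hx y hy a b ha hb hab
    simp only [Set.mem_setOf_eq] at *
    rw [inner_add_right, real_inner_smul_right, real_inner_smul_right, hx, hy, ← add_mul,
      hab, one_mul]
  -- properties of the recession cone
  have hCclosed : IsClosed C := by
    rw [hC]
    have heq : {d : EuclideanSpace ℝ (Fin (n+1)) | ∀ x ∈ Ω, ∀ r : ℝ, 0 ≤ r → x + r • d ∈ Ω}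
        = ⋂ (x ∈ Ω), ⋂ (r : ℝ) (_ : 0 ≤ r), (fun d => x + r • d) ⁻¹' Ω := by
      ext d; simp
    rw [heq]
    refine isClosed_biInter fun x hx => isClosed_iInter fun r => isClosed_iInter fun hr => ?_
    exact hclosed.preimage (continuous_const.add (continuous_id.const_smul r))
  have hCconv : Convex ℝ C := by
    rw [hC]
    intro d1 hd1 d2 hd2 a b ha hb hab x hx r hr
    have h1 := hd1 x hx r hr
    have h2 := hd2 x hx r hr
    have key : x + r • (a • d1 + b • d2) = a • (x + r • d1) + b • (x + r • d2) := by
      have hx' : x = a • x + b • x := by rw [← add_smul, hab, one_smul]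
      conv_lhs => rw [hx']
      rw [smul_add, smul_add, smul_add, smul_comm r a, smul_comm r b]
      abel
    rw [key]
    exact hconv h1 h2 ha hb hab
  have hCcone : ∀ c : ℝ, 0 ≤ c → ∀ d ∈ C, c • d ∈ C := by
    intro c hc d hd
    rw [hC] at hd ⊢
    intro x hx r hr
    have h := hd x hx (r * c) (mul_nonneg hr hc)
    rwa [smul_smul]
  -- the sections of Ω_R
  have hsecR : ∀ R : ℝ, 0 < R →
      (R⁻¹ • Ω) ∩ {x | (inner ℝ u x : ℝ) = t}
        = R⁻¹ • (Ω ∩ {x | (inner ℝ u x : ℝ) = R * t}) := by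
    intro R hR
    ext x
    simp only [Set.mem_inter_iff, Set.mem_smul_set, Set.mem_setOf_eq]
    constructor
    · rintro ⟨⟨y, hy, rfl⟩, hx⟩
      refine ⟨y, ⟨hy, ?_⟩, rfl⟩
      rw [real_inner_smul_right, inv_mul_eq_iff_eq_mul₀ hR.ne'] at hx
      exact hx
    · rintro ⟨y, ⟨hy, hy2⟩, rfl⟩
      refine ⟨⟨y, hy, rfl⟩, ?_⟩
      rw [real_inner_smul_right, hy2, inv_mul_eq_iff_eq_mul₀ hR.ne']
  -- eventual centroid formula for the rescaled sections
  have hcenR : ∀ᶠ R : ℝ in atTop, sectionCentroid n ((R⁻¹ • Ω) ∩ {x | (inner ℝ u x : ℝ) = t})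
      = R⁻¹ • q + t • w := by
    filter_upwards [eventually_gt_atTop 0, eventually_ge_atTop (max 1 (s₀ / t))] with R hR0 hR1
    have hs : s₀ ≤ R * t := by
      have h1 : s₀ / t ≤ R := le_trans (le_max_right 1 (s₀/t)) hR1
      calc s₀ = (s₀ / t) * t := by field_simp
      _ ≤ R * t := by nlinarith
    rw [hsecR R hR0,
      sectionCentroid_smul n (inv_pos.mpr hR0) _ ((hclosed.inter (hplcl (R*t))).measurableSet),
      hcen (R*t) hs, smul_add, smul_smul, inv_mul_cancel_left₀ hR0.ne']
  have hL2 : Tendsto (fun R : ℝ => sectionCentroid n ((R⁻¹ • Ω) ∩ {x | (inner ℝ u x : ℝ) = t}))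
      atTop (nhds (t • w)) := by
    have h0 : Tendsto (fun R : ℝ => R⁻¹ • q + t • w) atTop (nhds ((0:ℝ) • q + t • w)) :=
      (tendsto_inv_atTop_zero.smul_const q).add_const (t • w)
    rw [zero_smul, zero_add] at h0
    exact Tendsto.congr' (by filter_upwards [hcenR] with R h; exact h.symm) h0
  -- the Hausdorff-convergence limit
  have hL1 : Tendsto (fun R : ℝ => sectionCentroid n ((R⁻¹ • Ω) ∩ {x | (inner ℝ u x : ℝ) = t}))
      atTop (nhds (sectionCentroid n (C ∩ {x | (inner ℝ u x : ℝ) = t}))) := by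
    apply centroid_tendsto n u hu t _ _ Set.inter_subset_right
      (hCclosed.inter (hplcl t)) (hCconv.inter (hplcv t)) hCbd hCpos _ hHaus
    filter_upwards [eventually_ge_atTop R₀, eventually_gt_atTop 0] with R hR1 hR0
    obtain ⟨h1, h2, _, _⟩ := hsec R hR1
    exact ⟨Set.inter_subset_right,
      (hclosed.smul_of_ne_zero (inv_ne_zero hR0.ne')).inter (hplcl t),
      ((hconv.smul R⁻¹).inter (hplcv t)), h1, h2⟩
  have hKcent : sectionCentroid n (C ∩ {x | (inner ℝ u x : ℝ) = t}) = t • w :=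
    tendsto_nhds_unique hL1 hL2
  -- rescale the cone section
  have hsc : C ∩ {x | (inner ℝ u x : ℝ) = t'}
      = (t'/t) • (C ∩ {x | (inner ℝ u x : ℝ) = t}) := by
    ext x
    constructor
    · rintro ⟨hxC, hxt⟩
      refine Set.mem_smul_set.mpr ⟨(t/t') • x, ⟨hCcone (t/t') (by positivity) x hxC, ?_⟩, ?_⟩
      · rw [Set.mem_setOf_eq, real_inner_smul_right, hxt, div_mul_cancel₀ _ ht'.ne']
      · rw [smul_smul]
        have h1 : (t'/t) * (t/t') = 1 := by field_simp
        rw [h1, one_smul]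
    · intro hx
      obtain ⟨y, ⟨hyC, hyt⟩, rfl⟩ := Set.mem_smul_set.mp hx
      refine ⟨hCcone (t'/t) (by positivity) y hyC, ?_⟩
      rw [Set.mem_setOf_eq, real_inner_smul_right, hyt, div_mul_cancel₀ _ ht.ne']
  rw [hsc, sectionCentroid_smul n (div_pos ht' ht) _
    ((hCclosed.inter (hplcl t)).measurableSet), hKcent, smul_smul, div_mul_cancel₀ _ ht.ne']
end
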